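/- Let D be an orientation of a connected tree on n vertices with no immoralities. There is an adaptive procedure intervening on single vertices that identifies the root of D using at most O(log₂ n) interventions, where intervening on a vertex v reveals the directions of all edges incident to v (and then all edges directed away from identified directed edges by repeated application of Meek rule R1 are learned). -/

import Mathlib

/-- The set of directed edges learned after intervening on the vertices of `I` in the
orientation `dir` of the skeleton `G`: the directions of all edges incident to an intervened
vertex are revealed (rule R0), and the set is closed under Meek rule R1 (if `c → a` is known,
`a − b` is an edge and `c, b` are non-adjacent, then `a → b` is learned). -/
inductive Learned {V : Type} (G : SimpleGraph V) (dir : V → V → Prop) (I : Set V) :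
    V → V → Prop
  | base (u v : V) : dir u v → (u ∈ I ∨ v ∈ I) → Learned G dir I u v
  | meek1 (c a b : V) : Learned G dir I c a → dir a b → ¬ G.Adj c b → Learned G dir I a b

open SimpleGraph Relation

section aux
variable {V : Type} {G : SimpleGraph V} {dir : V → V → Prop}

lemma lDir {I : Set V} {u v : V} (h : Learned G dir I u v) : dir u v := by
  cases h with
  | base _ _ h _ => exact h
  | meek1 _ _ _ _ h _ => exact h

lemma lMono {I I' : Set V} (hII : I ⊆ I') {u v : V} (h : Learned G dir I u v) :
    Learned G dir I' u v := by
  induction h with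
  | base u v h hm => exact .base u v h (hm.imp (@hII u) (@hII v))
  | meek1 c a b _ hab hn ih => exact .meek1 c a b ih hab hn

lemma lTri (hT : G.IsTree) {a b c : V} (hab : G.Adj a b) (hbc : G.Adj b c)
    (hac : G.Adj a c) : False := by
  have h1 : (Walk.cons hac Walk.nil).IsPath := by
    simp [Walk.isPath_def, hac.ne]
  have h2 : (Walk.cons hab (Walk.cons hbc Walk.nil)).IsPath := by
    simp [Walk.isPath_def, hab.ne, hac.ne, hbc.ne]
  have := ((hT.existsUnique_path a c).unique h1 h2)
  simpa using congrArg Walk.length this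

lemma lIn (hT : G.IsTree) (hdir : ∀ u v : V, dir u v → G.Adj u v)
    (hImm : ∀ x y z : V, x ≠ y → ¬ G.Adj x y → dir x z → dir y z → False)
    {x y z : V} (hx : dir x z) (hy : dir y z) : x = y := by
  by_contra hne
  by_cases hadj : G.Adj x y
  · exact lTri hT hadj (hdir _ _ hy) (hdir _ _ hx)
  · exact hImm x y z hne hadj hx hy

lemma lChain (hT : G.IsTree) (hdir : ∀ u v : V, dir u v → G.Adj u v)
    (hOr : ∀ u v : V, G.Adj u v → (dir u v ↔ ¬ dir v u))
    (hImm : ∀ x y z : V, x ≠ y → ¬ G.Adj x y → dir x z → dir y z → False) :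
    ∀ {a v : V} (w : G.Walk a v), w.IsPath → (∀ u, dir u a → u ∉ w.support) →
      ∀ d ∈ w.darts, dir d.fst d.snd := by
  intro a v w
  induction w with
  | nil => simp
  | @cons a b v h rest ih =>
    intro hp hin d hd
    have hab : dir a b := by
      by_contra hn
      have hba : dir b a := by
        have := (hOr b a h.symm)
        tauto
      exact hin b hba (by simp)
    rw [Walk.darts_cons, List.mem_cons] at hd
    rcases hd with rfl | hd
    · exact hab
    · have hcons := (SimpleGraph.Walk.cons_isPath_iff h rest).mp hp
      have hp' := hcons.1
      have hanotin := hcons.2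
      refine ih hp' ?_ d hd
      intro u hu
      have : u = a := lIn hT hdir hImm hu hab
      subst this
      exact hanotin

lemma lReach : ∀ {a v : V} (w : G.Walk a v), (∀ d ∈ w.darts, dir d.fst d.snd) →
    Relation.ReflTransGen dir a v := by
  intro a v w
  induction w with
  | nil => intro _; exact .refl
  | @cons a b v h rest ih =>
    intro hd
    have hab : dir a b := hd ⟨(a,b),h⟩ (by simp [Walk.darts_cons])
    exact Relation.ReflTransGen.head hab (ih (fun d hdm => hd d (by simp [Walk.darts_cons, hdm])))

lemma lPathLen (hT : G.IsTree) {a v : V} (w : G.Walk a v) (hw : w.IsPath) :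
    w.length = G.dist a v := by
  obtain ⟨q, hq, hlen⟩ := hT.isConnected.exists_path_of_dist a v
  rw [(hT.existsUnique_path a v).unique hw hq, hlen]

lemma lProp (hT : G.IsTree) (hdir : ∀ u v : V, dir u v → G.Adj u v)
    (hOr : ∀ u v : V, G.Adj u v → (dir u v ↔ ¬ dir v u))
    {I : Set V} {c : V} (hc : c ∈ I) {a : V} (hrtg : Relation.ReflTransGen dir c a) :
    ∀ b, dir a b → Learned G dir I a b := by
  induction hrtg with
  | refl => exact fun b hb => .base c b hb (Or.inl hc)
  | @tail a' a hca' ha'a ih =>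
    intro b hab
    have l1 : Learned G dir I a' a := ih a ha'a
    refine .meek1 a' a b l1 hab ?_
    intro hadj
    exact lTri hT (hdir _ _ ha'a) (hdir _ _ hab) hadj

lemma lRoot [Fintype V] (hT : G.IsTree) (hdir : ∀ u v : V, dir u v → G.Adj u v)
    (hOr : ∀ u v : V, G.Adj u v → (dir u v ↔ ¬ dir v u)) :
    ∃ r : V, ∀ u, ¬ dir u r := by
  classical
  by_contra hno
  push_neg at hno
  choose f hf using hno
  have hinj : Function.Injective (fun v : V => (⟨s(f v, v), hdir _ _ (hf v)⟩ : G.edgeSet)) := by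
    intro v1 v2 h
    replace h := congrArg Subtype.val h
    simp only [Sym2.eq_iff] at h
    obtain ⟨h1, h2⟩ | ⟨h1, h2⟩ := h
    · exact h2
    · exfalso
      have ha : dir v2 v1 := h1 ▸ hf v1
      have hb : dir v1 v2 := by have := hf v2; rw [← h2] at this; exact this
      exact (hOr v1 v2 (hdir _ _ hb)).mp hb ha
  have hcard := Fintype.card_le_of_injective _ hinj
  rw [← SimpleGraph.edgeFinset_card] at hcard
  have h2 := hT.card_edgeFinset
  have : 0 < Fintype.card V := Fintype.card_pos_iff.mpr hT.isConnected.nonempty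
  omega

lemma lDepth (hT : G.IsTree) (hdir : ∀ u v : V, dir u v → G.Adj u v)
    (hOr : ∀ u v : V, G.Adj u v → (dir u v ↔ ¬ dir v u))
    (hImm : ∀ x y z : V, x ≠ y → ¬ G.Adj x y → dir x z → dir y z → False)
    {r : V} (hr : ∀ u, ¬ dir u r) {a b : V} (hab : dir a b) :
    G.dist r b = G.dist r a + 1 := by
  classical
  obtain ⟨w, hw, -⟩ := hT.existsUnique_path r a
  have hdarts := lChain hT hdir hOr hImm w hw (fun u hu => absurd hu (hr u))
  have hbnot : b ∉ w.support := by
    intro hb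
    have hq1 : (w.dropUntil b hb).IsPath := hw.dropUntil hb
    have hsingle : (Walk.cons ((hdir a b hab).symm) Walk.nil : G.Walk b a).IsPath := by
      simp [Walk.isPath_def, (hdir a b hab).ne.symm]
    have huniq := (hT.existsUnique_path b a).unique hq1 hsingle
    have hba : dir b a := by
      have := hdarts ⟨(b,a), (hdir a b hab).symm⟩
        (w.darts_dropUntil_subset hb (by rw [huniq]; simp [Walk.darts_cons]))
      exact this
    exact (hOr a b (hdir _ _ hab)).mp hab hba
  have hW : (w.append (Walk.cons (hdir a b hab) Walk.nil)).IsPath := by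
    rw [Walk.isPath_def, Walk.support_append]
    simp only [Walk.support_cons, Walk.support_nil, List.tail_cons]
    exact hw.support_nodup.append (List.nodup_singleton b)
      (List.disjoint_left.mpr (fun z hz hzb => by
        simp only [List.mem_singleton] at hzb; subst hzb; exact hbnot hz))
  have h1 := lPathLen hT _ hW
  have h2 := lPathLen hT w hw
  simp only [Walk.length_append, Walk.length_cons, Walk.length_nil] at h1
  omega

lemma lOnPath (hT : G.IsTree) (hdir : ∀ u v : V, dir u v → G.Adj u v)
    (hOr : ∀ u v : V, G.Adj u v → (dir u v ↔ ¬ dir v u))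
    (hImm : ∀ x y z : V, x ≠ y → ¬ G.Adj x y → dir x z → dir y z → False)
    {r : V} (hr : ∀ u, ¬ dir u r) {I : Set V} {v c : V} (hcI : c ∈ I)
    (w : G.Walk r v) (hw : w.IsPath) (hc : c ∈ w.support) {pv : V} (hpv : dir pv v) :
    Learned G dir I pv v := by
  classical
  have hdarts := lChain hT hdir hOr hImm w hw (fun u hu => absurd hu (hr u))
  have hrtg : Relation.ReflTransGen dir c v :=
    lReach (w.dropUntil c hc)
      (fun d hd => hdarts d (w.darts_dropUntil_subset hc hd))
  rcases hrtg.cases_tail with heq | ⟨u, hcu, huv⟩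
  · exact .base pv v hpv (Or.inr (heq ▸ hcI))
  · have hl := lProp hT hdir hOr hcI hcu v huv
    have : pv = u := lIn hT hdir hImm hpv huv
    rw [this]; exact hl

lemma lT (hT : G.IsTree) (hdir : ∀ u v : V, dir u v → G.Adj u v)
    (hOr : ∀ u v : V, G.Adj u v → (dir u v ↔ ¬ dir v u))
    (hImm : ∀ x y z : V, x ≠ y → ¬ G.Adj x y → dir x z → dir y z → False)
    {r : V} (hr : ∀ u, ¬ dir u r) {p c : V} (hpc : dir p c) {v : V}
    (w : G.Walk r v) (hw : w.IsPath) (hc : c ∉ w.support) :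
    G.dist p v < G.dist c v := by
  classical
  obtain ⟨wv, hwv, -⟩ := hT.existsUnique_path c v
  cases wv with
  | nil => exact absurd w.end_mem_support hc
  | @cons _ y _ h rest =>
    by_cases hyp : y = p
    · subst hyp
      have hrest := ((SimpleGraph.Walk.cons_isPath_iff h rest).mp hwv).1
      have e1 := lPathLen hT rest hrest
      have e2 := lPathLen hT _ hwv
      simp only [Walk.length_cons] at e2
      omega
    · exfalso
      obtain ⟨wc, hwc, -⟩ := hT.existsUnique_path r c
      have hdisj : ∀ z ∈ wc.support, z ∉ rest.support := by
        intro z hz1 hz2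
        have hcrest : c ∉ rest.support := ((SimpleGraph.Walk.cons_isPath_iff h rest).mp hwv).2
        have hzc : z ≠ c := fun e => hcrest (e ▸ hz2)
        have hzin : z ∈ (Walk.cons h rest).support := by
          simp [Walk.support_cons, hz2]
        have hq1 : (wc.dropUntil z hz1).IsPath := hwc.dropUntil hz1
        have hq2 : (((Walk.cons h rest).takeUntil z hzin).reverse).IsPath :=
          (hwv.takeUntil hzin).reverse
        have heq := (hT.existsUnique_path z c).unique hq1 hq2
        have htk : ∃ h2, (Walk.cons h rest).takeUntil z hzin
            = Walk.cons h (rest.takeUntil z h2) := by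
          simp only [Walk.takeUntil]
          rw [dif_neg (fun e => hzc e.symm)]
          exact ⟨hz2, rfl⟩
        obtain ⟨h2, htk⟩ := htk
        have hd0 : (⟨(c,y),h⟩ : G.Dart).symm ∈ (wc.dropUntil z hz1).darts := by
          rw [heq, Walk.mem_darts_reverse, SimpleGraph.Dart.symm_symm, htk]
          simp [Walk.darts_cons]
        have hyc : dir y c := by
          have hdartswc := lChain hT hdir hOr hImm wc hwc (fun u hu => absurd hu (hr u))
          have := hdartswc _ (wc.darts_dropUntil_subset hz1 hd0)
          exact this
        exact hyp (lIn hT hdir hImm hyc hpc)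
      have hWp : (wc.append (Walk.cons h rest)).IsPath := by
        rw [Walk.isPath_def, Walk.support_append]
        simp only [Walk.support_cons, List.tail_cons]
        exact hwc.support_nodup.append
          (((SimpleGraph.Walk.cons_isPath_iff h rest).mp hwv).1.support_nodup)
          (List.disjoint_left.mpr hdisj)
      have hWw : wc.append (Walk.cons h rest) = w := (hT.existsUnique_path r v).unique hWp hw
      have hcW : c ∈ (wc.append (Walk.cons h rest)).support := by
        rw [Walk.mem_support_append_iff]
        exact Or.inl wc.end_mem_support
      exact hc (hWw ▸ hcW)

set_option maxHeartbeats 1000000 in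
lemma lCentroid [Fintype V] [DecidableEq V] (hT : G.IsTree) (U : Finset V) {c x : V}
    (hadj : G.Adj c x)
    (hmin : (∑ u ∈ U, G.dist c u) ≤ ∑ u ∈ U, G.dist x u) :
    2 * (U.filter (fun u => G.dist x u < G.dist c u)).card ≤ U.card := by
  have hdcx : G.dist c x = 1 := by
    rw [SimpleGraph.dist_eq_one_iff_adj]; exact hadj
  have h1 : ∑ u ∈ U.filter (fun u => G.dist x u < G.dist c u), (G.dist x u + 1)
      ≤ ∑ u ∈ U.filter (fun u => G.dist x u < G.dist c u), G.dist c u :=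
    Finset.sum_le_sum (fun u hu => (Finset.mem_filter.mp hu).2)
  have h2 : ∑ u ∈ U.filter (fun u => ¬ G.dist x u < G.dist c u), G.dist x u
      ≤ ∑ u ∈ U.filter (fun u => ¬ G.dist x u < G.dist c u), (G.dist c u + 1) := by
    refine Finset.sum_le_sum (fun u hu => ?_)
    calc G.dist x u ≤ G.dist x c + G.dist c u := hT.isConnected.dist_triangle
    _ = G.dist c u + 1 := by rw [SimpleGraph.dist_comm, hdcx]; omega
  rw [Finset.sum_add_distrib, Finset.sum_const, smul_eq_mul, mul_one] at h1 h2
  have hs1 : ∑ u ∈ U.filter (fun u => G.dist x u < G.dist c u), G.dist c u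
      + ∑ u ∈ U.filter (fun u => ¬ G.dist x u < G.dist c u), G.dist c u
      = ∑ u ∈ U, G.dist c u := Finset.sum_filter_add_sum_filter_not U _ _
  have hs2 : ∑ u ∈ U.filter (fun u => G.dist x u < G.dist c u), G.dist x u
      + ∑ u ∈ U.filter (fun u => ¬ G.dist x u < G.dist c u), G.dist x u
      = ∑ u ∈ U, G.dist x u := Finset.sum_filter_add_sum_filter_not U _ _
  have hcards : (U.filter (fun u => G.dist x u < G.dist c u)).card
      + (U.filter (fun u => ¬ G.dist x u < G.dist c u)).card = U.card :=
    Finset.card_filter_add_card_filter_not (p := fun u => G.dist x u < G.dist c u)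
  omega

end aux


/-- There is an adaptive single-vertex intervention procedure that, on any orientation of a
tree with no immoralities, learns all edge directions (in particular identifies the root)
using `O(log₂ n)` interventions. -/
theorem stmt7 :
    ∃ C : ℕ, ∀ (V : Type) [Fintype V] [DecidableEq V] (G : SimpleGraph V), G.IsTree →
      ∃ strat : (V → V → Prop) → V,
        ∀ dir : V → V → Prop,
          (∀ u v : V, dir u v → G.Adj u v) →
          (∀ u v : V, G.Adj u v → (dir u v ↔ ¬ dir v u)) →
          (∀ x y z : V, x ≠ y → ¬ G.Adj x y → dir x z → dir y z → False) →
          ∃ (m : ℕ) (q : ℕ → V),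
            (∀ i : ℕ, q i = strat (fun a b =>
              Learned G dir {v : V | ∃ j < i, q j = v} a b)) ∧
            m ≤ C * (Nat.log 2 (Fintype.card V) + 1) ∧
            (∀ u v : V, dir u v → Learned G dir {v : V | ∃ j < m, q j = v} u v) := by
  refine ⟨1, ?_⟩
  intro V _ _ G hT
  classical
  have hne : Nonempty V := hT.isConnected.nonempty
  let US : (V → V → Prop) → Finset V := fun L => Finset.univ.filter (fun v => ∀ u, ¬ L u v)
  have hex : ∀ L : V → V → Prop, ∃ c : V,
      ∀ y : V, (∑ u ∈ US L, G.dist c u) ≤ ∑ u ∈ US L, G.dist y u := by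
    intro L
    obtain ⟨c, -, hc⟩ := Finset.exists_min_image Finset.univ
      (fun y => ∑ u ∈ US L, G.dist y u) ⟨Classical.arbitrary V, Finset.mem_univ _⟩
    exact ⟨c, fun y => hc y (Finset.mem_univ y)⟩
  choose strat hstrat using hex
  refine ⟨strat, ?_⟩
  intro dir hdir hOr hImm
  obtain ⟨r, hr⟩ := lRoot hT hdir hOr
  let Iset : ℕ → Set V := fun n =>
    Nat.rec (∅ : Set V) (fun _ S => S ∪ {strat (fun a b => Learned G dir S a b)}) n
  let q : ℕ → V := fun i => strat (fun a b => Learned G dir (Iset i) a b)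
  have hIsucc : ∀ i, Iset (i + 1) = Iset i ∪ {q i} := fun i => rfl
  have hIq : ∀ i, {v : V | ∃ j < i, q j = v} = Iset i := by
    intro i
    induction i with
    | zero => ext v; simp [Iset]
    | succ i ih =>
      have hsplit : {v : V | ∃ j < i + 1, q j = v}
          = {v : V | ∃ j < i, q j = v} ∪ {q i} := by
        ext v
        simp only [Set.mem_setOf_eq, Set.mem_union, Set.mem_singleton_iff,
          Nat.lt_succ_iff_lt_or_eq]
        constructor
        · rintro ⟨j, hj | rfl, hqv⟩
          · exact Or.inl ⟨j, hj, hqv⟩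
          · exact Or.inr hqv.symm
        · rintro (⟨j, hj, hqv⟩ | hv)
          · exact ⟨j, Or.inl hj, hqv⟩
          · exact ⟨i, Or.inr rfl, hv.symm⟩
      rw [hsplit, ih, hIsucc]
  have hq : ∀ i, q i = strat (fun a b =>
      Learned G dir {v : V | ∃ j < i, q j = v} a b) := fun i => by rw [hIq i]
  refine ⟨Nat.log 2 (Fintype.card V) + 1, q, hq, by rw [one_mul], ?_⟩
  rw [hIq]
  set m := Nat.log 2 (Fintype.card V) + 1 with hm
  let Us : ℕ → Finset V := fun i => US (fun a b => Learned G dir (Iset i) a b)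
  have hImono : ∀ i, Iset i ⊆ Iset (i + 1) := fun i => by
    rw [hIsucc]; exact Set.subset_union_left
  have hFmono : ∀ i, (∀ u v, dir u v → Learned G dir (Iset i) u v) →
      (∀ u v, dir u v → Learned G dir (Iset (i + 1)) u v) :=
    fun i hf u v huv => lMono (hImono i) (hf u v huv)
  have hrUs : ∀ i, r ∈ Us i := fun i =>
    Finset.mem_filter.mpr ⟨Finset.mem_univ r, fun u hl => hr u (lDir hl)⟩
  have hUsmono : ∀ i, Us (i + 1) ⊆ Us i := by
    intro i v hv
    exact Finset.mem_filter.mpr ⟨Finset.mem_univ v,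
      fun u hl => (Finset.mem_filter.mp hv).2 u (lMono (hImono i) hl)⟩
  have hF3 : ∀ i, ¬ (∀ u v, dir u v → Learned G dir (Iset (i + 1)) u v) →
      2 * (Us (i + 1)).card ≤ (Us i).card := by
    intro i hnf
    have hcI : q i ∈ Iset (i + 1) := by
      rw [hIsucc]; exact Set.mem_union_right _ rfl
    have hcr : q i ≠ r := by
      rintro hqr
      apply hnf
      intro u v huv
      obtain ⟨w, hw, -⟩ := hT.existsUnique_path r u
      have hrtg := lReach w (lChain hT hdir hOr hImm w hw (fun z hz => absurd hz (hr z)))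
      exact lProp hT hdir hOr (hqr ▸ hcI) hrtg v huv
    have hrc : Relation.ReflTransGen dir r (q i) := by
      obtain ⟨w, hw, -⟩ := hT.existsUnique_path r (q i)
      exact lReach w (lChain hT hdir hOr hImm w hw (fun z hz => absurd hz (hr z)))
    obtain (heq | ⟨p, -, hpc⟩) := hrc.cases_tail
    · exact absurd heq hcr
    have hsubset : Us (i + 1) ⊆ (Us i).filter (fun u => G.dist p u < G.dist (q i) u) := by
      intro v hv
      have hvUs : v ∈ Us i := hUsmono i hv
      refine Finset.mem_filter.mpr ⟨hvUs, ?_⟩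
      by_cases hvr : v = r
      · rw [hvr]
        have hdep := lDepth hT hdir hOr hImm hr hpc
        have e1 : G.dist p r = G.dist r p := SimpleGraph.dist_comm
        have e2 : G.dist (q i) r = G.dist r (q i) := SimpleGraph.dist_comm
        omega
      · obtain ⟨w, hw, -⟩ := hT.existsUnique_path r v
        have hrtgv := lReach w (lChain hT hdir hOr hImm w hw (fun z hz => absurd hz (hr z)))
        obtain (heqv | ⟨pv, -, hpv⟩) := hrtgv.cases_tail
        · exact absurd heqv hvr
        by_cases hcw : q i ∈ w.support
        · exact absurd (lOnPath hT hdir hOr hImm hr hcI w hw hcw hpv)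
            (fun hl => (Finset.mem_filter.mp hv).2 pv hl)
        · exact lT hT hdir hOr hImm hr hpc w hw hcw
    have hcent : 2 * ((Us i).filter (fun u => G.dist p u < G.dist (q i) u)).card
        ≤ (Us i).card :=
      lCentroid hT (Us i) ((hdir p (q i) hpc).symm)
        (hstrat (fun a b => Learned G dir (Iset i) a b) p)
    calc 2 * (Us (i + 1)).card ≤ 2 * ((Us i).filter
          (fun u => G.dist p u < G.dist (q i) u)).card :=
        Nat.mul_le_mul_left 2 (Finset.card_le_card hsubset)
      _ ≤ (Us i).card := hcent
  have hH : ∀ i, ¬ (∀ u v, dir u v → Learned G dir (Iset i) u v) →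
      (Us i).card * 2 ^ i ≤ Fintype.card V := by
    intro i
    induction i with
    | zero =>
      intro _
      simpa using (Finset.card_le_univ (Us 0)).trans (le_of_eq Finset.card_univ)
    | succ i ih =>
      intro hnf
      have hnf' := fun hf => hnf (hFmono i hf)
      have h1 := ih hnf'
      have h3 := hF3 i hnf
      calc (Us (i + 1)).card * 2 ^ (i + 1) = (2 * (Us (i + 1)).card) * 2 ^ i := by ring
        _ ≤ (Us i).card * 2 ^ i := Nat.mul_le_mul_right _ h3
        _ ≤ Fintype.card V := h1
  by_contra hnf
  have h := hH m hnf
  have hcard1 : 1 ≤ (Us m).card := Finset.card_pos.mpr ⟨r, hrUs m⟩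
  have h2m : 2 ^ m ≤ Fintype.card V :=
    le_trans (le_trans (by omega : 2 ^ m ≤ 1 * 2 ^ m) (Nat.mul_le_mul_right _ hcard1)) h
  have hV0 : Fintype.card V ≠ 0 := (Fintype.card_pos_iff.mpr hne).ne'
  have := (Nat.le_log_iff_pow_le (by norm_num) hV0).mpr h2m
  omega
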